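/- Fix real numbers λ > 0, a, b and δ ∈ (0,1). Then there exists R > 0 such that for every real k with |k| ≤ 1 − δ, every L > 0, and every σ ∈ ℂ with Re(σ) ≥ 0 and F_{a,b,λ,k,L}(σ) = 0, one has |σ| ≤ R. -/

import Mathlib

private lemma re_cpow_half_nonneg (z : ℂ) : 0 ≤ (z ^ ((1:ℂ)/2)).re := by
  by_cases hz : z = 0
  · rw [hz, Complex.zero_cpow (by norm_num : ((1:ℂ)/2) ≠ 0)]
    simp
  · rw [Complex.cpow_def_of_ne_zero hz, Complex.exp_re]
    apply mul_nonneg (Real.exp_nonneg _)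
    have him : (Complex.log z * ((1:ℂ)/2)).im = z.arg / 2 := by
      simp [Complex.mul_im, Complex.log_im]
      ring
    rw [him]
    apply Real.cos_nonneg_of_mem_Icc
    constructor
    · have := Complex.neg_pi_lt_arg z; linarith
    · have := Complex.arg_le_pi z; linarith

private lemma sq_cpow_half (w : ℂ) : (w ^ ((1:ℂ)/2)) ^ 2 = w := by
  have h : ((1:ℂ)/2) = (((2:ℕ)):ℂ)⁻¹ := by norm_num
  rw [h]
  exact Complex.cpow_nat_inv_pow w two_ne_zero

private lemma sinh_decomp (x y : ℝ) :
    Complex.sinh ((x:ℂ) + (y:ℂ) * Complex.I)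
      = ((Real.sinh x * Real.cos y : ℝ) : ℂ) + ((Real.cosh x * Real.sin y : ℝ) : ℂ) * Complex.I := by
  rw [Complex.sinh_add, Complex.cosh_mul_I, Complex.sinh_mul_I,
      ← Complex.ofReal_sinh, ← Complex.ofReal_cosh, ← Complex.ofReal_cos, ← Complex.ofReal_sin]
  push_cast
  ring

private lemma cosh_decomp (x y : ℝ) :
    Complex.cosh ((x:ℂ) + (y:ℂ) * Complex.I)
      = ((Real.cosh x * Real.cos y : ℝ) : ℂ) + ((Real.sinh x * Real.sin y : ℝ) : ℂ) * Complex.I := by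
  rw [Complex.cosh_add, Complex.cosh_mul_I, Complex.sinh_mul_I,
      ← Complex.ofReal_sinh, ← Complex.ofReal_cosh, ← Complex.ofReal_cos, ← Complex.ofReal_sin]
  push_cast
  ring

private lemma re_div_eq (s c : ℂ) :
    (s / c).re = (s.re * c.re + s.im * c.im) / Complex.normSq c := by
  rw [div_eq_mul_inv, Complex.mul_re, Complex.inv_re, Complex.inv_im]
  ring

private lemma tanh_re_eq (z : ℂ) :
    (Complex.sinh z / Complex.cosh z).re
      = Real.sinh z.re * Real.cosh z.re / Complex.normSq (Complex.cosh z) := by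
  have hs := sinh_decomp z.re z.im
  have hc := cosh_decomp z.re z.im
  rw [Complex.re_add_im] at hs hc
  have hsre : (Complex.sinh z).re = Real.sinh z.re * Real.cos z.im := by rw [hs]; simp only [Complex.add_re, Complex.add_im, Complex.ofReal_re, Complex.ofReal_im, Complex.mul_re, Complex.mul_im, Complex.I_re, Complex.I_im]; ring
  have hsim : (Complex.sinh z).im = Real.cosh z.re * Real.sin z.im := by rw [hs]; simp only [Complex.add_re, Complex.add_im, Complex.ofReal_re, Complex.ofReal_im, Complex.mul_re, Complex.mul_im, Complex.I_re, Complex.I_im]; ring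
  have hcre : (Complex.cosh z).re = Real.cosh z.re * Real.cos z.im := by rw [hc]; simp only [Complex.add_re, Complex.add_im, Complex.ofReal_re, Complex.ofReal_im, Complex.mul_re, Complex.mul_im, Complex.I_re, Complex.I_im]; ring
  have hcim : (Complex.cosh z).im = Real.sinh z.re * Real.sin z.im := by rw [hc]; simp only [Complex.add_re, Complex.add_im, Complex.ofReal_re, Complex.ofReal_im, Complex.mul_re, Complex.mul_im, Complex.I_re, Complex.I_im]; ring
  rw [re_div_eq, hsre, hsim, hcre, hcim]
  congr 1
  linear_combination (Real.sinh z.re * Real.cosh z.re) * Real.sin_sq_add_cos_sq z.im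


/-- The branch `η(σ)` of the square root of `((λ+1)²σ² − 4λab)/(4λ²)` given by the principal
complex power; its square is always `((λ+1)²σ² − 4λab)/(4λ²)`. -/
noncomputable def charEta (lam a b : ℝ) (σ : ℂ) : ℂ :=
  ((((lam : ℂ) + 1) ^ 2 * σ ^ 2 - 4 * (lam : ℂ) * a * b) / (4 * (lam : ℂ) ^ 2)) ^ ((1 : ℂ) / 2)

open Classical in
/-- The characteristic function `F_{a,b,λ,k,L}(σ) = (k−1)cosh(ηL) −
((k+1)((λ+1)/(2λ))σ + (kb/λ + a))·sinh(ηL)/η`, with `sinh(ηL)/η` interpreted as `L` when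
`η = 0`.  The value does not depend on the choice of the square root `η`. -/
noncomputable def Fchar (lam a b k L : ℝ) (σ : ℂ) : ℂ :=
  ((k : ℂ) - 1) * Complex.cosh (charEta lam a b σ * L) -
    (((k : ℂ) + 1) * (((lam : ℂ) + 1) / (2 * (lam : ℂ))) * σ + ((k : ℂ) * b / lam + a)) *
      (if charEta lam a b σ = 0 then (L : ℂ)
       else Complex.sinh (charEta lam a b σ * L) / charEta lam a b σ)

set_option maxHeartbeats 4000000 in
/-- For fixed `λ > 0`, `a`, `b` and `δ ∈ (0,1)`, the zeros of `F_{a,b,λ,k,L}`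
in the closed right half-plane are bounded uniformly in `|k| ≤ 1−δ` and `L > 0`. -/
theorem stmt_8 (lam a b δ : ℝ) (hlam : 0 < lam) (hδ0 : 0 < δ) (hδ1 : δ < 1) :
    ∃ R : ℝ, 0 < R ∧ ∀ k : ℝ, |k| ≤ 1 - δ → ∀ L : ℝ, 0 < L → ∀ σ : ℂ,
      0 ≤ σ.re → Fchar lam a b k L σ = 0 → ‖σ‖ ≤ R := by
  have hδ3 : (0:ℝ) < δ ^ 3 := by positivity
  set c0 : ℝ := a * b / lam with hc0def
  set B0 : ℝ := |b| / lam + |a| with hB0def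
  have hB0 : 0 ≤ B0 := by positivity
  set c1 : ℝ := Real.sqrt |c0| with hc1def
  have hc1 : 0 ≤ c1 := Real.sqrt_nonneg _
  have hc1sq : c1 ^ 2 = |c0| := Real.sq_sqrt (abs_nonneg _)
  set M0 : ℝ := 1 + |c0| + 2 * B0 / δ + 16 * (2 * c1 + B0) / δ ^ 3 + 5 * c1 ^ 2 with hM0def
  have ht1 : 0 ≤ |c0| := abs_nonneg _
  have ht2 : 0 ≤ 2 * B0 / δ := by positivity
  have ht3 : 0 ≤ 16 * (2 * c1 + B0) / δ ^ 3 := by positivity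
  have ht4 : 0 ≤ 5 * c1 ^ 2 := by positivity
  have hM0_1 : 1 ≤ M0 := by rw [hM0def]; linarith
  have hM0c : 1 + |c0| ≤ M0 := by rw [hM0def]; linarith
  have hM0B : 2 * B0 / δ ≤ M0 := by rw [hM0def]; linarith
  have hM016 : 16 * (2 * c1 + B0) / δ ^ 3 ≤ M0 := by rw [hM0def]; linarith
  have hM0c1 : 1 + 5 * c1 ^ 2 ≤ M0 := by rw [hM0def]; linarith
  clear_value c0 B0 c1 M0
  refine ⟨2 * lam / (lam + 1) * M0 + 1, by positivity, ?_⟩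
  intro k hk L hL σ hσre hF
  by_contra hcon
  push_neg at hcon
  obtain ⟨hk1, hk2⟩ := abs_le.mp hk
  have hkd1 : δ ≤ k + 1 := by linarith
  have hkd2 : δ ≤ 1 - k := by linarith
  have hklt : k + 1 ≤ 2 := by linarith
  simp only [Fchar] at hF
  set η : ℂ := charEta lam a b σ with hηdef
  set μ : ℂ := (((lam + 1) / (2 * lam) : ℝ) : ℂ) * σ with hμdef
  set M : ℝ := ‖μ‖ with hMdef
  clear_value η μ M
  have hlamc : (lam : ℂ) ≠ 0 := Complex.ofReal_ne_zero.mpr hlam.ne'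
  have hcoef : (0:ℝ) < (lam + 1) / (2 * lam) := by positivity
  have hMeq : M = (lam + 1) / (2 * lam) * ‖σ‖ := by
    rw [hMdef, hμdef, norm_mul, Complex.norm_real, Real.norm_eq_abs, abs_of_pos hcoef]
  have hM0M : M0 < M := by
    have h1 : (lam + 1) / (2 * lam) * (2 * lam / (lam + 1) * M0 + 1)
        = M0 + (lam + 1) / (2 * lam) := by field_simp
    have h2 := mul_lt_mul_of_pos_left hcon hcoef
    rw [h1] at h2
    rw [hMeq]
    linarith
  have hM1 : 1 < M := lt_of_le_of_lt hM0_1 hM0M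
  have hMpos : 0 < M := by linarith
  have hη2 : η ^ 2 = μ ^ 2 - (c0 : ℂ) := by
    rw [hηdef, charEta, sq_cpow_half, hμdef, hc0def]
    push_cast
    field_simp
    ring
  have hηre : 0 ≤ η.re := by rw [hηdef, charEta]; exact re_cpow_half_nonneg _
  have hμre : 0 ≤ μ.re := by
    rw [hμdef, Complex.re_ofReal_mul]
    exact mul_nonneg hcoef.le hσre
  have habs_c0 : ‖η - μ‖ * ‖η + μ‖ = |c0| := by
    rw [← norm_mul]
    have h : (η - μ) * (η + μ) = -(c0 : ℂ) := by linear_combination hη2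
    rw [h, norm_neg, Complex.norm_real, Real.norm_eq_abs]
  have hη0 : η ≠ 0 := by
    intro h
    have h2 : μ ^ 2 = (c0 : ℂ) := by
      have h3 := hη2; rw [h] at h3; simp at h3; linear_combination -h3
    have h3 : M ^ 2 = |c0| := by
      rw [hMdef, ← norm_pow, h2, Complex.norm_real, Real.norm_eq_abs]
    nlinarith only [h3, hM0c, hM0M, hM1, sq_nonneg (M - 1)]
  rw [if_neg hη0] at hF
  set z : ℂ := η * (L : ℂ) with hzdef
  have hzre : z.re = η.re * L := by
    rw [hzdef]
    simp [Complex.mul_re]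
  set Bc : ℂ := (k : ℂ) * b / lam + a with hBcdef
  set W : ℂ := ((k : ℂ) + 1) * μ + Bc with hWdef
  clear_value z Bc W
  have hWeq : ((k:ℂ) + 1) * (((lam:ℂ) + 1) / (2 * (lam:ℂ))) * σ + Bc = W := by
    rw [hWdef, hμdef]
    push_cast
    field_simp
  rw [hWeq] at hF
  have h1 : ((k:ℂ) - 1) * Complex.cosh z * η = W * Complex.sinh z := by
    have h := sub_eq_zero.mp hF
    field_simp at h
    linear_combination h
  have habsB : ‖Bc‖ ≤ B0 := by
    rw [hBcdef]
    have he : (k : ℂ) * b / lam + a = ((k * b / lam + a : ℝ) : ℂ) := by push_cast; ring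
    rw [he, Complex.norm_real, Real.norm_eq_abs]
    have h1 : |k * b / lam + a| ≤ |k * b / lam| + |a| := abs_add_le _ _
    have h2 : |k * b / lam| = |k| * |b| / lam := by
      rw [abs_div, abs_mul, abs_of_pos hlam]
    have h3 : |k| * |b| / lam ≤ |b| / lam := by
      have hkb : |k| * |b| ≤ |b| := by
        have h4 : 0 ≤ (1 - |k|) * |b| :=
          mul_nonneg (by linarith only [hk, hδ0]) (abs_nonneg b)
        linarith only [h4]
      gcongr
    rw [hB0def]
    calc |k * b / lam + a| ≤ |k * b / lam| + |a| := h1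
      _ = |k| * |b| / lam + |a| := by rw [h2]
      _ ≤ |b| / lam + |a| := by linarith
  have hk1abs : ‖(k:ℂ) - 1‖ ≤ 2 := by
    have he : ((k:ℂ) - 1) = ((k - 1 : ℝ) : ℂ) := by push_cast; ring
    rw [he, Complex.norm_real, Real.norm_eq_abs, abs_of_nonpos (by linarith)]
    linarith
  have hk2abs : ‖(k:ℂ) + 1‖ = k + 1 := by
    have he : ((k:ℂ) + 1) = ((k + 1 : ℝ) : ℂ) := by push_cast; ring
    rw [he, Complex.norm_real, Real.norm_eq_abs, abs_of_nonneg (by linarith)]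
  have hk1c : ((k:ℂ) + 1) ≠ 0 := by
    have he : ((k:ℂ) + 1) = ((k + 1 : ℝ) : ℂ) := by push_cast; ring
    rw [he]
    exact Complex.ofReal_ne_zero.mpr (by linarith)
  have htri : ∀ x y : ℂ, ‖x - y‖ ≤ ‖x‖ + ‖y‖ := by
    intro x y
    calc ‖x - y‖ = ‖x + -y‖ := by rw [sub_eq_add_neg]
      _ ≤ ‖x‖ + ‖-y‖ := norm_add_le _ _
      _ = ‖x‖ + ‖y‖ := by rw [norm_neg]
  have hWlb : δ * M / 2 ≤ ‖W‖ := by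
    have hkplus : ‖((k:ℂ) + 1) * μ‖ = (k + 1) * M := by
      rw [norm_mul, hk2abs, hMdef]
    have heq : ((k:ℂ)+1) * μ = W - Bc := by rw [hWdef]; ring
    have htr : (k + 1) * M ≤ ‖W‖ + B0 := by
      calc (k+1)*M = ‖W - Bc‖ := by rw [← hkplus, heq]
        _ ≤ ‖W‖ + ‖Bc‖ := htri _ _
        _ ≤ ‖W‖ + B0 := by linarith
    have hB : 2 * B0 ≤ δ * M := by
      have h := (div_le_iff₀ hδ0).mp (le_of_lt (lt_of_le_of_lt hM0B hM0M))
      linarith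
    linarith only [htr, hB, mul_le_mul_of_nonneg_right hkd1 hMpos.le]
  have hW0 : W ≠ 0 := by
    intro h
    rw [h] at hWlb
    simp at hWlb
    nlinarith only [hWlb, hδ0, hMpos]
  have hcosh0 : Complex.cosh z ≠ 0 := by
    intro h
    have hs : Complex.sinh z ≠ 0 := by
      intro hs
      have h2 := Complex.cosh_sq_sub_sinh_sq z
      rw [h, hs] at h2
      norm_num at h2
    rw [h] at h1
    simp at h1
    rcases h1 with h1 | h1
    · exact hW0 h1
    · exact hs h1
  have hTq : Complex.sinh z / Complex.cosh z = ((k:ℂ) - 1) * η / W := by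
    rw [div_eq_div_iff hcosh0 hW0]
    linear_combination -h1
  have hM16 : 16 * (2 * c1 + B0) ≤ δ ^ 3 * M := by
    have h := (div_le_iff₀ hδ3).mp (le_of_lt (lt_of_le_of_lt hM016 hM0M))
    linarith
  have habs_small : ∀ N : ℂ, ‖N‖ ≤ 2 * c1 + B0 →
      ‖((k:ℂ) - 1) * N / (((k:ℂ) + 1) * W)‖ ≤ δ / 4 := by
    intro N hN
    rw [norm_div, norm_mul, norm_mul, hk2abs]
    have hnum : ‖(k:ℂ) - 1‖ * ‖N‖ ≤ 2 * (2 * c1 + B0) :=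
      mul_le_mul hk1abs hN (norm_nonneg N) (by norm_num)
    have hden2 : δ * (δ * M / 2) ≤ (k + 1) * ‖W‖ :=
      mul_le_mul hkd1 hWlb (by positivity) (by linarith only [hkd1, hδ0])
    calc ‖(k:ℂ)-1‖ * ‖N‖ / ((k + 1) * ‖W‖)
        ≤ 2 * (2 * c1 + B0) / (δ * (δ * M / 2)) := by
          apply div_le_div₀ (by positivity) hnum (by positivity) hden2
      _ ≤ δ / 4 := by
          rw [div_le_div_iff₀ (by positivity) (by norm_num)]
          nlinarith only [hM16]
  have hWne' : ((k:ℂ) + 1) * μ + Bc ≠ 0 := by rw [← hWdef]; exact hW0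
  have habsre : ∀ (w : ℂ) (t : ℝ), ‖w - (t:ℂ)‖ ≤ δ/4 → |w.re - t| ≤ δ/4 := by
    intro w t h
    have h2 := Complex.abs_re_le_norm (w - (t:ℂ))
    rw [Complex.sub_re, Complex.ofReal_re] at h2
    linarith [le_trans h2 h]
  by_cases hcase : ‖η - μ‖ ≤ c1
  · -- Case 1: η ≈ μ, T near (k-1)/(k+1) < 0, but Re T ≥ 0
    have hid1 : ((k:ℂ) - 1) * η / W - (((k - 1)/(k + 1) : ℝ) : ℂ)
        = ((k:ℂ) - 1) * (((k:ℂ) + 1) * (η - μ) - Bc) / (((k:ℂ) + 1) * W) := by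
      rw [hWdef]
      push_cast
      field_simp
      ring
    have hN : ‖((k:ℂ) + 1) * (η - μ) - Bc‖ ≤ 2 * c1 + B0 := by
      calc ‖((k:ℂ) + 1) * (η - μ) - Bc‖
          ≤ ‖((k:ℂ) + 1) * (η - μ)‖ + ‖Bc‖ := htri _ _
        _ = (k + 1) * ‖η - μ‖ + ‖Bc‖ := by rw [norm_mul, hk2abs]
        _ ≤ 2 * c1 + B0 := by
            have h5 := mul_le_mul hklt hcase (norm_nonneg _) (by norm_num : (0:ℝ) ≤ 2)
            linarith only [h5, habsB]
    have hsmall := habs_small _ hN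
    rw [← hid1] at hsmall
    have hre1 : 0 ≤ (((k:ℂ) - 1) * η / W).re := by
      rw [← hTq, tanh_re_eq]
      apply div_nonneg _ (Complex.normSq_nonneg _)
      apply mul_nonneg _ (Real.cosh_pos _).le
      apply Real.sinh_nonneg_iff.mpr
      rw [hzre]
      exact mul_nonneg hηre hL.le
    have hre2 := habsre _ _ hsmall
    have ht : (k - 1)/(k + 1) ≤ -(δ/2) := by
      rw [div_le_iff₀ (by linarith : (0:ℝ) < k + 1)]
      nlinarith only [hkd2, mul_nonneg hδ0.le (by linarith only [hklt] : (0:ℝ) ≤ 2 - (k + 1))]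
    have h6 := abs_le.mp hre2
    linarith only [h6.2, ht, hre1, hδ0]
  · -- Case 2: η ≈ -μ, forces Re η = 0, but T near (1-k)/(1+k) > 0
    push_neg at hcase
    have hcase2 : ‖η + μ‖ ≤ c1 := by
      by_contra hc
      push_neg at hc
      linarith only [habs_c0, hc1sq,
        mul_le_mul_of_nonneg_left hcase.le hc1,
        mul_le_mul_of_nonneg_left hc.le hc1,
        mul_pos (sub_pos.mpr hcase) (sub_pos.mpr hc)]
    have him : η.re * η.im = μ.re * μ.im := by
      have h := congrArg Complex.im hη2
      simp only [pow_two, Complex.mul_im, Complex.sub_im, Complex.ofReal_im] at h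
      linarith
    have hup : η.re + μ.re ≤ c1 := by
      have h := Complex.abs_re_le_norm (η + μ)
      rw [Complex.add_re] at h
      have h2 := le_trans (le_abs_self _) (le_trans h hcase2)
      linarith
    have hpc1 : μ.re ≤ c1 := by linarith
    have hvq : |η.im + μ.im| ≤ c1 := by
      have h := Complex.abs_im_le_norm (η + μ)
      rw [Complex.add_im] at h
      linarith [le_trans h hcase2]
    have hM2 : μ.re ^ 2 + μ.im ^ 2 = M ^ 2 := by
      rw [hMdef, Complex.sq_norm, Complex.normSq_apply]; ring
    have hMM : M ≤ M ^ 2 := by nlinarith only [hM1, sq_nonneg (M - 1)]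
    have hMsq : 1 + 5 * c1 ^ 2 ≤ M ^ 2 := by linarith only [hMM, le_trans hM0c1 hM0M.le]
    have hq2 : 1 + 4 * c1 ^ 2 ≤ μ.im ^ 2 := by
      nlinarith only [hM2, hMsq, mul_le_mul hpc1 hpc1 hμre hc1]
    have hq0 : μ.im ≠ 0 := by
      intro h; rw [h] at hq2
      nlinarith only [hq2, sq_nonneg c1]
    have hqabs : 0 < |μ.im| := abs_pos.mpr hq0
    have hqc1 : c1 < |μ.im| := by
      by_contra hle
      push_neg at hle
      have h2 : |μ.im| ^ 2 ≤ c1 ^ 2 := pow_le_pow_left₀ (abs_nonneg _) hle 2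
      rw [sq_abs] at h2
      linarith only [h2, hq2, sq_nonneg c1]
    have hvqneg : η.im * μ.im < 0 := by
      have ha : (η.im + μ.im) * μ.im ≤ c1 * |μ.im| := by
        calc (η.im + μ.im) * μ.im ≤ |(η.im + μ.im) * μ.im| := le_abs_self _
          _ = |η.im + μ.im| * |μ.im| := abs_mul _ _
          _ ≤ c1 * |μ.im| := mul_le_mul_of_nonneg_right hvq (abs_nonneg _)
      nlinarith only [ha, sq_abs μ.im, mul_lt_mul_of_pos_right hqc1 hqabs]
    have hu0 : η.re = 0 := by
      by_contra hu
      have hupos : 0 < η.re := lt_of_le_of_ne hηre (Ne.symm hu)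
      have h2 : η.re * (η.im * μ.im) < 0 := mul_neg_of_pos_of_neg hupos hvqneg
      have h3 : η.re * (η.im * μ.im) = μ.re * μ.im * μ.im := by
        rw [← mul_assoc, him]
      nlinarith only [h2, h3, mul_nonneg hμre (sq_nonneg μ.im)]
    have hre0 : (((k:ℂ) - 1) * η / W).re = 0 := by
      rw [← hTq, tanh_re_eq]
      have hz0 : z.re = 0 := by rw [hzre, hu0]; ring
      rw [hz0, Real.sinh_zero]
      simp
    have h1k : (1:ℂ) + (k:ℂ) ≠ 0 := by rw [add_comm]; exact hk1c
    have hid2 : ((k:ℂ) - 1) * η / W - (((1 - k)/(1 + k) : ℝ) : ℂ)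
        = ((k:ℂ) - 1) * (((k:ℂ) + 1) * (η + μ) + Bc) / (((k:ℂ) + 1) * W) := by
      rw [hWdef]
      push_cast
      field_simp [h1k]
      ring
    have hN : ‖((k:ℂ) + 1) * (η + μ) + Bc‖ ≤ 2 * c1 + B0 := by
      calc ‖((k:ℂ) + 1) * (η + μ) + Bc‖
          ≤ ‖((k:ℂ) + 1) * (η + μ)‖ + ‖Bc‖ := norm_add_le _ _
        _ = (k + 1) * ‖η + μ‖ + ‖Bc‖ := by rw [norm_mul, hk2abs]
        _ ≤ 2 * c1 + B0 := by
            have h5 := mul_le_mul hklt hcase2 (norm_nonneg _) (by norm_num : (0:ℝ) ≤ 2)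
            linarith only [h5, habsB]
    have hsmall := habs_small _ hN
    rw [← hid2] at hsmall
    have hre2 := habsre _ _ hsmall
    rw [hre0] at hre2
    have hs2 : δ / 2 ≤ (1 - k)/(1 + k) := by
      rw [le_div_iff₀ (by linarith : (0:ℝ) < 1 + k)]
      nlinarith only [hkd2, mul_nonneg hδ0.le (by linarith only [hklt] : (0:ℝ) ≤ 2 - (k + 1))]
    have h6 := abs_le.mp hre2
    linarith only [h6.1, hs2, hδ0]
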